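/- arXiv:2402.02177 — 2 statements merged into one kernel-verified Lean document; each statement's English description precedes it below -/
import Mathlib

section
/- Let G be a finite group fitting into a short exact sequence 1 → A_4 → G → D_{2n} → 1 for some n ≥ 2, where D_{2n} is the dihedral group of order 2n. Then G contains a normal abelian subgroup of index at most 12. -/
open Equiv Pointwise

private abbrev A4' := alternatingGroup (Fin 4)

private def s3 : A4' := ⟨c[0, 1, 2], Equiv.Perm.mem_alternatingGroup.mpr (by decide)⟩
private def s2 : A4' := ⟨c[0, 1] * c[2, 3], Equiv.Perm.mem_alternatingGroup.mpr (by decide)⟩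

private lemma hcov : ∀ x : A4', x = 1 ∨ x = s3 ∨ x = s2 ∨ x = s3*s3 ∨ x = s3*s2 ∨ x = s2*s3 ∨
    x = s3*s3*s2 ∨ x = s3*s2*s3 ∨ x = s2*s3*s3 ∨ x = s2*s3*s2 ∨ x = s3*s3*s2*s3 ∨
    x = s3*s2*s3*s3 := by decide

private lemma mem_of_gen (T : Subgroup A4') (h3 : s3 ∈ T) (h2 : s2 ∈ T) (x : A4') : x ∈ T := by
  rcases hcov x with h|h|h|h|h|h|h|h|h|h|h|h <;> subst h
  · exact one_mem T
  · exact h3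
  · exact h2
  · exact mul_mem h3 h3
  · exact mul_mem h3 h2
  · exact mul_mem h2 h3
  · exact mul_mem (mul_mem h3 h3) h2
  · exact mul_mem (mul_mem h3 h2) h3
  · exact mul_mem (mul_mem h2 h3) h3
  · exact mul_mem (mul_mem h2 h3) h2
  · exact mul_mem (mul_mem (mul_mem h3 h3) h2) h3
  · exact mul_mem (mul_mem (mul_mem h3 h2) h3) h3

private lemma dihedral_zpowers_normal (n : ℕ) :
    (Subgroup.zpowers (DihedralGroup.r 1 : DihedralGroup n)).Normal := by
  constructor
  intro x hx g
  rcases Subgroup.mem_zpowers_iff.mp hx with ⟨m, rfl⟩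
  rw [← conj_zpow]
  have : g * (DihedralGroup.r 1 : DihedralGroup n) * g⁻¹ = DihedralGroup.r 1 ∨
      g * DihedralGroup.r 1 * g⁻¹ = (DihedralGroup.r 1)⁻¹ := by
    have hinv : ((DihedralGroup.r 1 : DihedralGroup n))⁻¹ = DihedralGroup.r (-1) := by
      refine (eq_inv_of_mul_eq_one_left ?_).symm
      rw [DihedralGroup.r_mul_r, neg_add_cancel, DihedralGroup.one_def]
    cases g with
    | r i => left; rw [mul_inv_eq_iff_eq_mul, DihedralGroup.r_mul_r, DihedralGroup.r_mul_r,
        add_comm]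
    | sr i => right; rw [mul_inv_eq_iff_eq_mul, hinv, DihedralGroup.sr_mul_r,
        DihedralGroup.r_mul_sr, sub_neg_eq_add]
  rcases this with h'|h' <;> rw [h']
  · exact zpow_mem (Subgroup.mem_zpowers _) m
  · exact zpow_mem (inv_mem (Subgroup.mem_zpowers _)) m

/-- If a finite group `G` fits into `1 → A₄ → G → D₂ₙ → 1` with `D₂ₙ` dihedral of order `2n`,
`n ≥ 2`, then `G` contains a normal abelian subgroup of index at most 12. -/
theorem stmt_11 {G : Type*} [Group G] [Finite G] (F : Subgroup G) (hFn : F.Normal)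
    (hF : Nonempty (F ≃* alternatingGroup (Fin 4)))
    (n : ℕ) (hn : 2 ≤ n) (hB : Nonempty ((G ⧸ F) ≃* DihedralGroup n)) :
    ∃ N : Subgroup G, N.Normal ∧ IsMulCommutative N ∧ N.index ≤ 12 := by
  obtain ⟨e⟩ := hF
  obtain ⟨φ⟩ := hB
  -- the projection to the dihedral group
  set ψ : G →* DihedralGroup n := φ.toMonoidHom.comp (QuotientGroup.mk' F) with hψdef
  have hψsurj : Function.Surjective ψ := φ.surjective.comp (QuotientGroup.mk'_surjective F)
  have hker : ∀ g : G, ψ g = 1 ↔ g ∈ F := by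
    intro g
    rw [hψdef, MonoidHom.comp_apply, MulEquiv.coe_toMonoidHom, MulEquiv.map_eq_one_iff,
      QuotientGroup.mk'_apply, QuotientGroup.eq_one_iff]
  -- K : the preimage of the rotation subgroup
  set R : Subgroup (DihedralGroup n) := Subgroup.zpowers (DihedralGroup.r 1) with hRdef
  have hRnormal : R.Normal := dihedral_zpowers_normal n
  set K : Subgroup G := R.comap ψ with hKdef
  have hKnormal : K.Normal := hRnormal.comap ψ
  have hFK : F ≤ K := by
    intro g hg
    have h1 : ψ g = 1 := (hker g).mpr hg
    simp only [hKdef, Subgroup.mem_comap, h1]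
    exact one_mem R
  have hKindex : K.index = 2 := by
    rw [hKdef, Subgroup.index_comap_of_surjective _ hψsurj]
    have h1 : Nat.card R * R.index = Nat.card (DihedralGroup n) := Subgroup.card_mul_index R
    rw [hRdef, Nat.card_zpowers, DihedralGroup.orderOf_r_one, DihedralGroup.nat_card] at h1
    have hn0 : 0 < n := by omega
    exact Nat.eq_of_mul_eq_mul_left hn0 (h1.trans (mul_comm 2 n))
  -- the two distinguished generators of F
  set a' : G := ((e.symm s3 : F) : G) with ha'def
  set b' : G := ((e.symm s2 : F) : G) with hb'def
  have ha'F : a' ∈ F := (e.symm s3).2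
  have hb'F : b' ∈ F := (e.symm s2).2
  -- the centralizer of F
  set Cz : Subgroup G := Subgroup.centralizer (F : Set G) with hCzdef
  have hCznormal : Cz.Normal := by
    constructor
    intro c hc g
    rw [hCzdef, Subgroup.mem_centralizer_iff] at hc ⊢
    intro h hh
    have h1 : g⁻¹ * h * g ∈ F := by
      have := hFn.conj_mem h hh g⁻¹
      simpa using this
    have h2 := hc _ h1
    have h3 : h * (g * c * g⁻¹) = g * (g⁻¹ * h * g * c) * g⁻¹ := by group
    rw [h3, h2]
    group
  set D : Subgroup G := K ⊓ Cz with hDdef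
  have hDnormal : D.Normal :=
    ⟨fun x hx g => ⟨hKnormal.conj_mem _ hx.1 g, hCznormal.conj_mem _ hx.2 g⟩⟩
  have hDK : D ≤ K := inf_le_left
  have hDCz : D ≤ Cz := inf_le_right
  -- elements of F centralizing F are trivial
  have cent_triv : ∀ g : G, g ∈ F → g ∈ Cz → g = 1 := by
    intro g hg hgc
    have key : ∀ x : A4', (∀ y : A4', x*y = y*x) → x = 1 := by decide
    have hcomm := Subgroup.mem_centralizer_iff.mp hgc
    have hx : ∀ y : A4', e ⟨g, hg⟩ * y = y * e ⟨g, hg⟩ := by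
      intro y
      have h2 : ↑(e.symm y) * g = g * ↑(e.symm y) := hcomm _ (e.symm y).2
      have h4 : (⟨g, hg⟩ : F) * e.symm y = e.symm y * ⟨g, hg⟩ := Subtype.ext (by simpa using h2.symm)
      calc e ⟨g, hg⟩ * y = e (⟨g, hg⟩ * e.symm y) := by rw [map_mul, e.apply_symm_apply]
        _ = e (e.symm y * ⟨g, hg⟩) := by rw [h4]
        _ = y * e ⟨g, hg⟩ := by rw [map_mul, e.apply_symm_apply]
    have h5 : (⟨g, hg⟩ : F) = 1 := e.injective (by rw [key _ hx, map_one])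
    simpa using congrArg Subtype.val h5
  -- anything commuting with a' and b' centralizes F
  have gen : ∀ g : G, a' * g = g * a' → b' * g = g * b' → g ∈ Cz := by
    intro g hga hgb
    rw [hCzdef, Subgroup.mem_centralizer_iff]
    intro h hh
    let T : Subgroup A4' :=
      { carrier := {x | (↑(e.symm x) : G) * g = g * ↑(e.symm x)}
        one_mem' := by simp
        mul_mem' := by
          intro x y hx hy
          simp only [Set.mem_setOf_eq, map_mul, Subgroup.coe_mul] at *
          rw [mul_assoc, hy, ← mul_assoc, hx, mul_assoc]
        inv_mem' := by
          intro x hx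
          simp only [Set.mem_setOf_eq, map_inv] at *
          have := congrArg (fun z => (↑(e.symm x) : G)⁻¹ * z * (↑(e.symm x) : G)⁻¹) hx
          simpa [mul_assoc] using this.symm }
    have h3 : s3 ∈ T := hga
    have h2 : s2 ∈ T := hgb
    have := mem_of_gen T h3 h2 (e ⟨h, hh⟩)
    have h6 : (↑(e.symm (e ⟨h, hh⟩)) : G) * g = g * ↑(e.symm (e ⟨h, hh⟩)) := this
    rwa [e.symm_apply_apply] at h6
  -- the subgroup of square-one elements of F
  have hpow : ∀ (x : G) (hx : x ∈ F) (m : ℕ), x ^ m = 1 ↔ (e ⟨x, hx⟩) ^ m = 1 := by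
    intro x hx m
    rw [← map_pow, MulEquiv.map_eq_one_iff]
    simp [Subtype.ext_iff]
  let V : Subgroup G :=
    { carrier := {g | g ∈ F ∧ g ^ 2 = 1}
      one_mem' := ⟨F.one_mem, one_pow 2⟩
      mul_mem' := by
        rintro x y ⟨hx, hx2⟩ ⟨hy, hy2⟩
        refine ⟨F.mul_mem hx hy, ?_⟩
        have key : ∀ u v : A4', u^2 = 1 → v^2 = 1 → (u*v)^2 = 1 := by decide
        have h := key (e ⟨x, hx⟩) (e ⟨y, hy⟩) ((hpow x hx 2).mp hx2) ((hpow y hy 2).mp hy2)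
        rw [← map_mul] at h
        have h2 : (⟨x, hx⟩ : F) * ⟨y, hy⟩ = ⟨x*y, F.mul_mem hx hy⟩ := rfl
        rw [h2] at h
        exact (hpow (x*y) (F.mul_mem hx hy) 2).mpr h
      inv_mem' := by
        rintro x ⟨hx, hx2⟩
        exact ⟨F.inv_mem hx, by rw [inv_pow, hx2, inv_one]⟩ }
  have hVmem : ∀ x : G, x ∈ V ↔ x ∈ F ∧ x ^ 2 = 1 := fun x => Iff.rfl
  have hVF : ∀ x : G, x ∈ V → x ∈ F := fun x hx => hx.1
  have hVnormal : V.Normal := by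
    constructor
    intro x hx g
    refine ⟨hFn.conj_mem x hx.1 g, ?_⟩
    rw [conj_pow, hx.2, mul_one, mul_inv_cancel]
  set N : Subgroup G := V ⊔ D with hNdef
  haveI := hDnormal
  haveI := hVnormal
  have hNnormal : N.Normal := Subgroup.sup_normal V D
  -- commutativity facts
  have hVD_comm : ∀ v ∈ V, ∀ d ∈ D, v * d = d * v := by
    intro v hv d hd
    exact Subgroup.mem_centralizer_iff.mp (hDCz hd) v hv.1
  have hVV : ∀ v ∈ V, ∀ w ∈ V, v * w = w * v := by
    intro v hv w hw
    have key : ∀ u u' : A4', u^2 = 1 → u'^2 = 1 → u*u' = u'*u := by decide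
    have h := key (e ⟨v, hv.1⟩) (e ⟨w, hw.1⟩) ((hpow v hv.1 2).mp hv.2) ((hpow w hw.1 2).mp hw.2)
    rw [← map_mul, ← map_mul] at h
    have := e.injective h
    simpa [Subtype.ext_iff] using this
  have hDD : ∀ d ∈ D, ∀ d' ∈ D, d * d' = d' * d := by
    intro d hd d' hd'
    have hcomm : ψ d * ψ d' = ψ d' * ψ d := by
      obtain ⟨i, hi⟩ := Subgroup.mem_zpowers_iff.mp hd.1
      obtain ⟨j, hj⟩ := Subgroup.mem_zpowers_iff.mp hd'.1
      rw [← hi, ← hj, ← zpow_add, ← zpow_add, add_comm]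
    have h1 : ψ (d * d' * (d' * d)⁻¹) = 1 := by
      simp only [map_mul, map_inv]
      rw [hcomm, mul_inv_cancel]
    have hf : d * d' * (d' * d)⁻¹ ∈ F := (hker _).mp h1
    have hcz : d * d' * (d' * d)⁻¹ ∈ Cz :=
      Cz.mul_mem (Cz.mul_mem (hDCz hd) (hDCz hd')) (Cz.inv_mem (Cz.mul_mem (hDCz hd') (hDCz hd)))
    exact mul_inv_eq_one.mp (cent_triv _ hf hcz)
  have hNcomm : IsMulCommutative N := by
    constructor; constructor
    rintro ⟨x, hx⟩ ⟨y, hy⟩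
    have hmul : (N : Set G) = (V : Set G) * (D : Set G) := Subgroup.mul_normal V D
    have hx' : x ∈ (V : Set G) * (D : Set G) := by rw [← hmul]; exact hx
    have hy' : y ∈ (V : Set G) * (D : Set G) := by rw [← hmul]; exact hy
    obtain ⟨v1, hv1, d1, hd1, rfl⟩ := hx'
    obtain ⟨v2, hv2, d2, hd2, rfl⟩ := hy'
    apply Subtype.ext
    show (v1 * d1) * (v2 * d2) = (v2 * d2) * (v1 * d1)
    calc (v1 * d1) * (v2 * d2) = v1 * (d1 * v2) * d2 := by group
      _ = v1 * (v2 * d1) * d2 := by rw [hVD_comm v2 hv2 d1 hd1]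
      _ = (v1 * v2) * (d1 * d2) := by group
      _ = (v2 * v1) * (d2 * d1) := by rw [hVV v1 hv1 v2 hv2, hDD d1 hd1 d2 hd2]
      _ = v2 * (v1 * d2) * d1 := by group
      _ = v2 * (d2 * v1) * d1 := by rw [hVD_comm v1 hv1 d2 hd2]
      _ = (v2 * d2) * (v1 * d1) := by group
  -- index bound
  refine ⟨N, hNnormal, hNcomm, ?_⟩
  -- conjugation data
  let f : G → A4' → A4' := fun k x =>
    e ⟨k * ↑(e.symm x) * k⁻¹, hFn.conj_mem _ (e.symm x).2 k⟩
  have hcoepow : ∀ (x : A4') (m : ℕ), x ^ m = 1 → (↑(e.symm x) : G) ^ m = 1 := by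
    intro x m hx
    have h1 : ((e.symm x) ^ m : F) = 1 := by rw [← map_pow, hx, map_one]
    calc (↑(e.symm x) : G) ^ m = ↑((e.symm x) ^ m) := by norm_cast
      _ = 1 := by rw [h1, OneMemClass.coe_one]
  have hfpow1 : ∀ (k : G) (x : A4') (m : ℕ), x ^ m = 1 → (f k x) ^ m = 1 := by
    intro k x m hx
    show (e ⟨_, _⟩) ^ m = 1
    rw [← map_pow, MulEquiv.map_eq_one_iff]
    rw [Subtype.ext_iff, SubmonoidClass.coe_pow, OneMemClass.coe_one]
    show (k * ↑(e.symm x) * k⁻¹) ^ m = 1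
    rw [conj_pow, hcoepow x m hx, mul_one, mul_inv_cancel]
  have hfne1 : ∀ (k : G) (x : A4'), x ≠ 1 → f k x ≠ 1 := by
    intro k x hx h
    rw [MulEquiv.map_eq_one_iff] at h
    have h1 : k * ↑(e.symm x) * k⁻¹ = 1 := by
      simpa using congrArg Subtype.val h
    have h2 : (↑(e.symm x) : G) = 1 := by
      have := congrArg (fun z => k⁻¹ * z * k) h1
      simpa [mul_assoc] using this
    have h3 : e.symm x = 1 := Subtype.ext (by simpa using h2)
    exact hx (by rw [← e.apply_symm_apply x, h3, map_one])
  -- the counting type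
  have conj_comm_iff : ∀ (k1 k2 x : G),
      k1 * x * k1⁻¹ = k2 * x * k2⁻¹ ↔ x * (k1⁻¹ * k2) = (k1⁻¹ * k2) * x := by
    intro k1 k2 x
    constructor
    · intro h
      have := congrArg (fun z => k1⁻¹ * z * k2) h
      simpa [mul_assoc] using this
    · intro h
      have := congrArg (fun z => k1 * z * k2⁻¹) h
      simp only [← mul_assoc] at this
      calc k1 * x * k1⁻¹ = k1 * (x * (k1⁻¹ * k2)) * k2⁻¹ := by group
        _ = k1 * ((k1⁻¹ * k2) * x) * k2⁻¹ := by rw [h]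
        _ = k2 * x * k2⁻¹ := by group
  have hfeq : ∀ (k1 k2 : G) (x : A4'), f k1 x = f k2 x ↔
      (↑(e.symm x) : G) * (k1⁻¹ * k2) = (k1⁻¹ * k2) * ↑(e.symm x) := by
    intro k1 k2 x
    rw [← conj_comm_iff]
    constructor
    · intro h
      have := e.injective h
      simpa [Subtype.ext_iff] using this
    · intro h
      exact congrArg e (Subtype.ext h)
  have hs3pow : s3 ^ 3 = 1 := by decide
  have hs3ne : s3 ≠ 1 := by decide
  have hs2pow : s2 ^ 2 = 1 := by decide
  have hs2ne : s2 ≠ 1 := by decide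
  set D' : Subgroup K := D.subgroupOf K with hD'def
  let SS := {p : A4' × A4' // p.1 ^ 3 = 1 ∧ p.1 ≠ 1 ∧ p.2 ^ 2 = 1 ∧ p.2 ≠ 1}
  let g0 : K → SS := fun k =>
    ⟨(f ↑k s3, f ↑k s2), ⟨hfpow1 ↑k s3 3 hs3pow, hfne1 ↑k s3 hs3ne,
      hfpow1 ↑k s2 2 hs2pow, hfne1 ↑k s2 hs2ne⟩⟩
  have hg0 : ∀ k1 k2 : K, g0 k1 = g0 k2 ↔ (k1⁻¹ * k2 : K) ∈ D' := by
    intro k1 k2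
    constructor
    · intro h
      have h1 : f ↑k1 s3 = f ↑k2 s3 := congrArg (fun z => z.1.1) h
      have h2 : f ↑k1 s2 = f ↑k2 s2 := congrArg (fun z => z.1.2) h
      rw [hfeq] at h1 h2
      have hC : ((k1⁻¹ * k2 : K) : G) ∈ Cz := by
        apply gen
        · simpa [ha'def] using h1
        · simpa [hb'def] using h2
      rw [hD'def, Subgroup.mem_subgroupOf]
      exact ⟨(k1⁻¹ * k2 : K).2, hC⟩
    · intro h
      rw [hD'def, Subgroup.mem_subgroupOf] at h
      have hC : ((k1⁻¹ * k2 : K) : G) ∈ Cz := h.2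
      have hcm := Subgroup.mem_centralizer_iff.mp hC
      apply Subtype.ext
      apply Prod.ext
      · exact (hfeq _ _ s3).mpr (by simpa using hcm a' ha'F)
      · exact (hfeq _ _ s2).mpr (by simpa using hcm b' hb'F)
  have hrK : D.relIndex K ≤ 24 := by
    show (D.subgroupOf K).index ≤ 24
    rw [Subgroup.index_eq_card]
    have hresp : ∀ k1 k2 : K, (QuotientGroup.leftRel D').r k1 k2 → g0 k1 = g0 k2 := by
      intro k1 k2 h
      exact (hg0 k1 k2).mpr (QuotientGroup.leftRel_apply.mp h)
    let μ : K ⧸ D' → SS := Quotient.lift g0 hresp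
    have hinj : Function.Injective μ := by
      intro q1 q2
      refine Quotient.inductionOn₂ q1 q2 ?_
      intro k1 k2 h
      exact Quotient.sound (QuotientGroup.leftRel_apply.mpr ((hg0 k1 k2).mp h))
    have h24 : Nat.card SS = 24 := by
      rw [Nat.card_eq_fintype_card]; decide
    calc Nat.card (K ⧸ D.subgroupOf K) ≤ Nat.card SS := Nat.card_le_card_of_injective μ hinj
      _ = 24 := h24
  have hrN : 4 ≤ D.relIndex N := by
    show 4 ≤ (D.subgroupOf N).index
    rw [Subgroup.index_eq_card]
    let ι : {x : A4' // x ^ 2 = 1} → N ⧸ D.subgroupOf N := fun x =>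
      QuotientGroup.mk ⟨↑(e.symm x.1), Subgroup.mem_sup_left ⟨(e.symm x.1).2, hcoepow x.1 2 x.2⟩⟩
    have hinj : Function.Injective ι := by
      intro x y h
      have h1 := QuotientGroup.eq.mp h
      rw [Subgroup.mem_subgroupOf] at h1
      have h2 : ((↑(e.symm x.1) : G))⁻¹ * ↑(e.symm y.1) ∈ F :=
        F.mul_mem (F.inv_mem (e.symm x.1).2) (e.symm y.1).2
      have h3 := cent_triv _ h2 h1.2
      have h4 : (↑(e.symm x.1) : G) = ↑(e.symm y.1) := by
        rwa [inv_mul_eq_one] at h3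
      have h5 : e.symm x.1 = e.symm y.1 := Subtype.ext h4
      exact Subtype.ext (e.symm.injective h5)
    have h4 : Nat.card {x : A4' // x ^ 2 = 1} = 4 := by
      rw [Nat.card_eq_fintype_card]; decide
    calc 4 = Nat.card {x : A4' // x ^ 2 = 1} := h4.symm
      _ ≤ Nat.card (N ⧸ D.subgroupOf N) := Nat.card_le_card_of_injective ι hinj
  have hDN : D ≤ N := le_sup_right
  have e1 : D.relIndex N * N.index = D.index := Subgroup.relIndex_mul_index hDN
  have e2 : D.relIndex K * K.index = D.index := Subgroup.relIndex_mul_index hDK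
  rw [hKindex] at e2
  have h48 : D.index ≤ 48 := by omega
  have hfin : N.index * 4 ≤ 48 := by
    calc N.index * 4 ≤ N.index * D.relIndex N := Nat.mul_le_mul_left _ hrN
      _ = D.index := by rw [mul_comm]; exact e1
      _ ≤ 48 := h48
  omega
end

section
/- Let G be a finite group fitting into a short exact sequence 1 → S_4 → G → S_4 → 1. Then G contains a normal abelian subgroup of index at most 36. -/
open Equiv
set_option maxRecDepth 500000

private def c4 : Perm (Fin 4) := finRotate 4
private def s4a : Perm (Fin 4) := Equiv.swap 0 1

private lemma closure_c4_s4a :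
    Subgroup.closure ({c4, s4a} : Set (Perm (Fin 4))) = ⊤ := by
  have h := Equiv.Perm.closure_cycle_adjacent_swap (σ := finRotate 4)
    (isCycle_finRotate (n := 2)) (support_finRotate (n := 2)) (0 : Fin 4)
  have h0 : (finRotate 4) 0 = 1 := by decide
  rw [h0] at h
  exact h

set_option maxRecDepth 10000 in
private lemma key14 : ∀ a b : Perm (Fin 4),
    ((a*a)*(a*a) = 1 ∧ a*a ≠ 1 ∧ b*b = 1 ∧ b ≠ 1 ∧ a*b ≠ 1 ∧ (a*b)*((a*b)*(a*b)) = 1) →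
    ∃ g : Perm (Fin 4), a = g * c4 * g⁻¹ ∧ b = g * s4a * g⁻¹ := by decide

private lemma aut_inner (φ : Perm (Fin 4) ≃* Perm (Fin 4)) :
    ∃ g : Perm (Fin 4), ∀ x, φ x = g * x * g⁻¹ := by
  have hinj := φ.injective
  obtain ⟨g, hg1, hg2⟩ := key14 (φ c4) (φ s4a) (by
    refine ⟨?_, ?_, ?_, ?_, ?_, ?_⟩
    · simp only [← map_mul]
      rw [show (c4*c4)*(c4*c4) = 1 by decide, map_one]
    · rw [← map_mul]; intro h; exact absurd (hinj (h.trans (map_one φ).symm)) (by decide)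
    · rw [← map_mul, show s4a*s4a = 1 by decide, map_one]
    · intro h; exact absurd (hinj (h.trans (map_one φ).symm)) (by decide)
    · rw [← map_mul]; intro h; exact absurd (hinj (h.trans (map_one φ).symm)) (by decide)
    · simp only [← map_mul]
      rw [show (c4*s4a)*((c4*s4a)*(c4*s4a)) = 1 by decide, map_one])
  refine ⟨g, fun x => ?_⟩
  have hx : x ∈ Subgroup.closure ({c4, s4a} : Set (Perm (Fin 4))) := by
    rw [closure_c4_s4a]; trivial
  induction hx using Subgroup.closure_induction with
  | mem y hy => rcases hy with rfl | rfl
                · exact hg1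
                · exact hg2
  | one => simp
  | mul y z _ _ hy hz => rw [map_mul, hy, hz]; group
  | inv y _ hy => rw [map_inv, hy]; group

private def P14 (x : Perm (Fin 4)) : Prop := x * x = 1 ∧ ∃ y : Perm (Fin 4), y * y = x

private instance : DecidablePred P14 := fun x =>
  inferInstanceAs (Decidable (x * x = 1 ∧ ∃ y : Perm (Fin 4), y * y = x))

private def K14 : Subgroup (Perm (Fin 4)) where
  carrier := {x | P14 x}
  one_mem' := by decide
  mul_mem' := fun {a b} ha hb =>
    (show ∀ a b, P14 a → P14 b → P14 (a*b) by decide) a b ha hb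
  inv_mem' := fun {a} ha => (show ∀ a, P14 a → P14 a⁻¹ by decide) a ha

private instance : DecidablePred (· ∈ K14) := fun x => inferInstanceAs (Decidable (P14 x))

private lemma K14_conj : ∀ g x : Perm (Fin 4), x ∈ K14 → g * x * g⁻¹ ∈ K14 :=
  (show ∀ g x : Perm (Fin 4), P14 x → P14 (g * x * g⁻¹) by decide)

private lemma K14_comm : ∀ x y : Perm (Fin 4), x ∈ K14 → y ∈ K14 → x * y = y * x :=
  (show ∀ x y : Perm (Fin 4), P14 x → P14 y → x * y = y * x by decide)

private lemma K14_card : Nat.card K14 = 4 := by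
  rw [Nat.card_eq_fintype_card]; rfl

private lemma center_triv : ∀ z : Perm (Fin 4), (∀ w, z * w = w * z) → z = 1 := by decide

private lemma card_S4 : Nat.card (Perm (Fin 4)) = 24 := by
  rw [Nat.card_eq_fintype_card, Fintype.card_perm, Fintype.card_fin]
  rfl

/-- If a finite group `G` fits into `1 → S₄ → G → S₄ → 1`, then `G` contains a normal abelian
subgroup of index at most 36. -/
theorem stmt_14 {G : Type*} [Group G] [Finite G] (F : Subgroup G) (hFn : F.Normal)
    (hF : Nonempty (F ≃* Equiv.Perm (Fin 4)))
    (hB : Nonempty ((G ⧸ F) ≃* Equiv.Perm (Fin 4))) :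
    ∃ N : Subgroup G, N.Normal ∧ IsMulCommutative N ∧ N.index ≤ 36 := by
  obtain ⟨e⟩ := hF
  obtain ⟨q⟩ := hB
  set C : Subgroup G := Subgroup.centralizer (F : Set G) with hC
  -- elements of F and C commute
  have hcomm : ∀ u ∈ F, ∀ v ∈ C, u * v = v * u := fun u hu v hv =>
    (Subgroup.mem_centralizer_iff.mp hv) u hu
  -- F ∩ C is trivial
  have hFC : ∀ z : G, z ∈ F → z ∈ C → z = 1 := by
    intro z hzF hzC
    have : ∀ w : Perm (Fin 4), e ⟨z, hzF⟩ * w = w * e ⟨z, hzF⟩ := by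
      intro w
      have := hcomm (e.symm w : F) (e.symm w).2 z hzC
      have h2 : (⟨z, hzF⟩ : F) * e.symm w = e.symm w * ⟨z, hzF⟩ := by
        ext; push_cast; rw [← this]
      calc e ⟨z, hzF⟩ * w = e (⟨z, hzF⟩ * e.symm w) := by rw [map_mul, e.apply_symm_apply]
        _ = e (e.symm w * ⟨z, hzF⟩) := by rw [h2]
        _ = w * e ⟨z, hzF⟩ := by rw [map_mul, e.apply_symm_apply]
    have := center_triv _ this
    have : (⟨z, hzF⟩ : F) = 1 := e.injective (by rw [this, map_one])
    exact congrArg Subtype.val this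
  -- Step 1 : G = F * C
  have step1 : ∀ g : G, ∃ f ∈ F, ∃ c ∈ C, g = f * c := by
    intro g
    obtain ⟨p, hp⟩ := aut_inner ((e.symm.trans (MulAut.conjNormal (H := F) g)).trans e)
    refine ⟨(e.symm p : G), (e.symm p).2, (e.symm p : G)⁻¹ * g, ?_, by group⟩
    rw [Subgroup.mem_centralizer_iff]
    intro h hh
    have := hp (e ⟨h, hh⟩)
    simp only [MulEquiv.trans_apply, e.symm_apply_apply] at this
    -- this : e (conjNormal g ⟨h,hh⟩) = p * e ⟨h,hh⟩ * p⁻¹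
    have h2 : (MulAut.conjNormal (H := F) g ⟨h, hh⟩ : G)
        = (e.symm p : G) * h * (e.symm p : G)⁻¹ := by
      have h3 : (MulAut.conjNormal (H := F) g ⟨h, hh⟩ : F)
          = e.symm p * ⟨h, hh⟩ * (e.symm p)⁻¹ := by
        apply e.injective
        rw [this, map_mul, map_mul, e.apply_symm_apply, map_inv, e.apply_symm_apply]
      rw [h3]; push_cast; ring_nf
    rw [MulAut.conjNormal_apply] at h2
    set qe := ((e.symm p : F) : G) with hqe
    have h2' : g * h * g⁻¹ = qe * h * qe⁻¹ := h2
    calc h * (qe⁻¹ * g) = qe⁻¹ * (qe * h * qe⁻¹) * g := by group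
      _ = qe⁻¹ * (g * h * g⁻¹) * g := by rw [← h2']
      _ = (qe⁻¹ * g) * h := by group
  -- the isomorphism θ : C ≃* S4
  let ρ : C →* G ⧸ F := (QuotientGroup.mk' F).comp C.subtype
  have hρinj : Function.Injective ρ := by
    rw [injective_iff_map_eq_one]
    intro ⟨c, hc⟩ h
    have : c ∈ F := (QuotientGroup.eq_one_iff c).mp h
    exact Subtype.ext (hFC c this hc)
  have hρsurj : Function.Surjective ρ := by
    intro z
    obtain ⟨g, rfl⟩ := QuotientGroup.mk_surjective z
    obtain ⟨f, hf, c, hc, rfl⟩ := step1 g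
    refine ⟨⟨c, hc⟩, ?_⟩
    show QuotientGroup.mk c = QuotientGroup.mk (f * c)
    rw [QuotientGroup.eq]
    have : c⁻¹ * (f * c) = c⁻¹ * f * c := by group
    rw [this]
    exact hFn.conj_mem' f hf c
  let θ : C ≃* Perm (Fin 4) := (MulEquiv.ofBijective ρ ⟨hρinj, hρsurj⟩).trans q
  -- injections
  let jF : Perm (Fin 4) →* G := F.subtype.comp e.symm.toMonoidHom
  let jC : Perm (Fin 4) →* G := C.subtype.comp θ.symm.toMonoidHom
  have hjF : ∀ x, jF x ∈ F := fun x => (e.symm x).2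
  have hjC : ∀ x, jC x ∈ C := fun x => (θ.symm x).2
  have hjFinj : Function.Injective jF :=
    F.subtype_injective.comp e.symm.injective
  have hjCinj : Function.Injective jC :=
    C.subtype_injective.comp θ.symm.injective
  -- the subgroup N
  let ψ : K14 × K14 →* G :=
    MonoidHom.noncommCoprod (jF.comp K14.subtype) (jC.comp K14.subtype)
      (fun m n => hcomm _ (hjF m) _ (hjC n))
  have hψ : ∀ p : K14 × K14, ψ p = jF p.1 * jC p.2 := fun p => rfl
  have hψinj : Function.Injective ψ := by
    rw [injective_iff_map_eq_one]
    intro p hp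
    rw [hψ] at hp
    have h1 : jF p.1 = (jC p.2)⁻¹ := by
      rw [eq_inv_iff_mul_eq_one]; exact hp
    have h2 : jF (p.1 : Perm (Fin 4)) ∈ C := h1 ▸ C.inv_mem (hjC _)
    have h3 : jF (p.1 : Perm (Fin 4)) = 1 := hFC _ (hjF _) h2
    have h4 : (p.1 : Perm (Fin 4)) = 1 := hjFinj (by rw [h3, map_one])
    have h5 : jC (p.2 : Perm (Fin 4)) = 1 := by
      have := hp; rw [h3, one_mul] at this; exact this
    have h6 : (p.2 : Perm (Fin 4)) = 1 := hjCinj (by rw [h5, map_one])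
    have : p = 1 := Prod.ext (Subtype.ext h4) (Subtype.ext h6)
    exact this
  refine ⟨ψ.range, ?_, ?_, ?_⟩
  · -- Normal
    constructor
    intro n hn g
    obtain ⟨⟨x, y⟩, rfl⟩ := hn
    obtain ⟨f, hf, c, hc, rfl⟩ := step1 g
    rw [hψ]
    have hu : jF (x : Perm (Fin 4)) ∈ F := hjF _
    have hv : jC (y : Perm (Fin 4)) ∈ C := hjC _
    set u := jF (x : Perm (Fin 4))
    set v := jC (y : Perm (Fin 4))
    have key : (f*c) * (u*v) * (f*c)⁻¹ = (f*u*f⁻¹) * (c*v*c⁻¹) := by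
      have hcu : c * u = u * c := (hcomm u hu c hc).symm
      have hfw : ∀ w ∈ C, f * w = w * f := fun w hw => (hcomm f hf w hw)
      have hcvc : c*v*c⁻¹ ∈ C := C.mul_mem (C.mul_mem hc hv) (C.inv_mem hc)
      calc (f*c)*(u*v)*(f*c)⁻¹ = f*(c*u*c⁻¹)*(c*v*c⁻¹)*f⁻¹ := by group
        _ = f*u*(c*v*c⁻¹)*f⁻¹ := by rw [show c*u*c⁻¹ = u by rw [hcu]; group]
        _ = f*u*f⁻¹*(f*(c*v*c⁻¹)*f⁻¹) := by group
        _ = f*u*f⁻¹*(c*v*c⁻¹) := by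
              rw [show f*(c*v*c⁻¹)*f⁻¹ = c*v*c⁻¹ by rw [hfw _ hcvc]; group]
    rw [key]
    -- f*u*f⁻¹ = jF x' for x' ∈ K14
    have hx' : f*u*f⁻¹ = jF (e ⟨f, hf⟩ * x * (e ⟨f, hf⟩)⁻¹) := by
      show f*u*f⁻¹ = ((e.symm (e ⟨f, hf⟩ * x * (e ⟨f, hf⟩)⁻¹) : F) : G)
      rw [map_mul, map_mul, map_inv, e.symm_apply_apply]
      push_cast
      rfl
    have hy' : c*v*c⁻¹ = jC (θ ⟨c, hc⟩ * y * (θ ⟨c, hc⟩)⁻¹) := by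
      show c*v*c⁻¹ = ((θ.symm (θ ⟨c, hc⟩ * y * (θ ⟨c, hc⟩)⁻¹) : C) : G)
      rw [map_mul, map_mul, map_inv, θ.symm_apply_apply]
      push_cast
      rfl
    rw [hx', hy']
    exact ⟨(⟨_, K14_conj (e ⟨f, hf⟩) _ x.2⟩, ⟨_, K14_conj (θ ⟨c, hc⟩) _ y.2⟩), rfl⟩
  · -- Commutative
    constructor
    constructor
    intro a b
    obtain ⟨pa, hpa⟩ := a.2
    obtain ⟨pb, hpb⟩ := b.2
    have hK : ∀ pa pb : K14 × K14, pa * pb = pb * pa := by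
      intro pa pb
      have h1 : (pa.1 : Perm (Fin 4)) * pb.1 = pb.1 * pa.1 := K14_comm _ _ pa.1.2 pb.1.2
      have h2 : (pa.2 : Perm (Fin 4)) * pb.2 = pb.2 * pa.2 := K14_comm _ _ pa.2.2 pb.2.2
      exact Prod.ext (Subtype.ext h1) (Subtype.ext h2)
    apply Subtype.ext
    push_cast
    rw [← hpa, ← hpb, ← map_mul, ← map_mul, hK]
  · -- index
    have hcard : Nat.card ψ.range = 16 := by
      have := Nat.card_congr (MonoidHom.ofInjective hψinj).toEquiv
      rw [← this, Nat.card_prod, K14_card]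
    have hF24 : Nat.card F = 24 := by
      rw [Nat.card_congr e.toEquiv, card_S4]
    have hFi : F.index = 24 := by
      rw [Subgroup.index, Nat.card_congr q.toEquiv, card_S4]
    have hG : Nat.card G = 576 := by
      rw [← Subgroup.card_mul_index F, hF24, hFi]
    have := Subgroup.card_mul_index ψ.range
    rw [hcard, hG] at this
    omega
end
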